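/- Let n ≥ 2, 2 ≤ p < n, and κ > 0. There exists a constant C = C(p, n, κ) > 0 such that for all vectors x, y ∈ ℝⁿ, |x+y|^p ≥ |x|^p + p|x|^{p-2}(x·y) + (1-κ)((p/2)|x|^{p-2}|y|² + (p(p-2)/2)|x|^{p-4}(x·y)²) − C|y|^p, where terms with negative powers of |x| are interpreted as 0 when x = 0. -/

import Mathlib

open Real
open scoped InnerProductSpace

set_option linter.unusedVariables false

lemma taylor2 {q ε : ℝ} (hq : 1 < q) (hε : 0 < ε) :
    ∃ δ : ℝ, 0 < δ ∧ δ ≤ 1/2 ∧ ∀ h : ℝ, |h| ≤ δ →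
      1 + q * h + (q * (q-1)/2 - ε) * h^2 ≤ (1+h) ^ q := by
  have hcont : ContinuousAt (fun s : ℝ => q*(q-1)*(1+s)^(q-2)) 0 := by
    apply ContinuousAt.mul continuousAt_const
    apply ContinuousAt.rpow_const (continuousAt_const.add continuousAt_id)
    left; simp
  rw [Metric.continuousAt_iff] at hcont
  obtain ⟨δ₀, hδ₀, hball⟩ := hcont (2*ε) (by linarith)
  set δ := min (δ₀/2) (1/2) with hδdef
  have hδpos : 0 < δ := lt_min (by linarith) (by norm_num)
  have hδhalf : δ ≤ 1/2 := min_le_right _ _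
  refine ⟨δ, hδpos, hδhalf, ?_⟩
  set B := q*(q-1)/2 - ε with hB
  have hkey : ∀ s : ℝ, |s| ≤ δ → 0 ≤ q*(q-1)*(1+s)^(q-2) - 2*B := by
    intro s hs
    have hd : dist s 0 < δ₀ := by
      rw [Real.dist_eq, sub_zero]
      calc |s| ≤ δ := hs
        _ ≤ δ₀/2 := min_le_left _ _
        _ < δ₀ := by linarith
    have h2 := hball hd
    rw [Real.dist_eq] at h2
    simp only [add_zero, Real.one_rpow, mul_one] at h2
    have h3 := abs_lt.1 h2
    have : q*(q-1) - 2*ε ≤ q*(q-1)*(1+s)^(q-2) := by linarith [h3.1]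
    rw [hB]; linarith
  have hne : ∀ h : ℝ, |h| ≤ δ → (1:ℝ) + h ≠ 0 := by
    intro h hh
    have := (abs_le.1 hh).1
    have : (0:ℝ) < 1 + h := by linarith
    linarith
  -- derivative of g
  set g : ℝ → ℝ := fun h => q*(1+h)^(q-1) - (q + 2*B*h) with hgdef
  set ψ : ℝ → ℝ := fun h => (1+h)^q - (1 + q*h + B*h^2) with hψdef
  have hbase : ∀ h : ℝ, HasDerivAt (fun h : ℝ => 1+h) 1 h := fun h =>
    (hasDerivAt_id h).const_add 1
  have hg' : ∀ h : ℝ, |h| ≤ δ → HasDerivAt g (q*(q-1)*(1+h)^(q-2) - 2*B) h := by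
    intro h hh
    have h1 := (hbase h).rpow_const (p := q-1) (Or.inl (hne h hh))
    have h2 := (h1.const_mul q).sub (((hasDerivAt_id h).const_mul (2*B)).const_add q)
    exact h2.congr_deriv (by rw [show q-1-1 = q-2 by ring]; ring)
  have hψ' : ∀ h : ℝ, |h| ≤ δ → HasDerivAt ψ (g h) h := by
    intro h hh
    have h1 := (hbase h).rpow_const (p := q) (Or.inl (hne h hh))
    have h2 : HasDerivAt (fun h : ℝ => 1 + q*h + B*h^2) (q + B*(2*h)) h := by
      have ha : HasDerivAt (fun h : ℝ => 1 + q*h) q h := by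
        simpa using ((hasDerivAt_id h).const_mul q).const_add 1
      have hb : HasDerivAt (fun h : ℝ => B*h^2) (B*(2*h)) h := by
        simpa using ((hasDerivAt_pow 2 h).const_mul B)
      exact ha.add hb
    have h3 := h1.sub h2
    exact h3.congr_deriv (by simp only [hgdef]; ring)
  have memabs : ∀ h ∈ Set.Icc (-δ) δ, |h| ≤ δ := by
    intro h hh; exact abs_le.2 ⟨hh.1, hh.2⟩
  -- g monotone on [-δ, δ]
  have hgmono : MonotoneOn g (Set.Icc (-δ) δ) := by
    apply monotoneOn_of_hasDerivWithinAt_nonneg (convex_Icc _ _)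
      (fun h hh => ((hg' h (memabs h hh)).continuousAt).continuousWithinAt)
      (f' := fun h => q*(q-1)*(1+h)^(q-2) - 2*B)
    · intro x hx
      rw [interior_Icc] at hx
      exact (hg' x (memabs x ⟨hx.1.le, hx.2.le⟩)).hasDerivWithinAt
    · intro x hx
      rw [interior_Icc] at hx
      exact hkey x (memabs x ⟨hx.1.le, hx.2.le⟩)
  have hg0 : g 0 = 0 := by simp [hgdef]
  have hψ0 : ψ 0 = 0 := by simp [hψdef]
  have hψmono : MonotoneOn ψ (Set.Icc 0 δ) := by
    apply monotoneOn_of_hasDerivWithinAt_nonneg (convex_Icc _ _)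
      (f' := g)
    · intro h hh
      have : |h| ≤ δ := abs_le.2 ⟨by linarith [hh.1, hδpos], hh.2⟩
      exact ((hψ' h this).continuousAt).continuousWithinAt
    · intro x hx
      rw [interior_Icc] at hx
      exact (hψ' x (abs_le.2 ⟨by linarith [hx.1], hx.2.le⟩)).hasDerivWithinAt
    · intro x hx
      rw [interior_Icc] at hx
      have hx' : x ∈ Set.Icc (-δ) δ := ⟨by linarith [hx.1], hx.2.le⟩
      have h0 : (0:ℝ) ∈ Set.Icc (-δ) δ := ⟨by linarith, hδpos.le⟩
      have := hgmono h0 hx' hx.1.le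
      rw [hg0] at this; exact this
  have hψanti : AntitoneOn ψ (Set.Icc (-δ) 0) := by
    apply antitoneOn_of_hasDerivWithinAt_nonpos (convex_Icc _ _)
      (f' := g)
    · intro h hh
      have : |h| ≤ δ := abs_le.2 ⟨hh.1, by linarith [hh.2, hδpos]⟩
      exact ((hψ' h this).continuousAt).continuousWithinAt
    · intro x hx
      rw [interior_Icc] at hx
      exact (hψ' x (abs_le.2 ⟨hx.1.le, by linarith [hx.2]⟩)).hasDerivWithinAt
    · intro x hx
      rw [interior_Icc] at hx
      have hx' : x ∈ Set.Icc (-δ) δ := ⟨hx.1.le, by linarith [hx.2]⟩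
      have h0 : (0:ℝ) ∈ Set.Icc (-δ) δ := ⟨by linarith, hδpos.le⟩
      have := hgmono hx' h0 hx.2.le
      rw [hg0] at this; exact this
  intro h hh
  have habs := abs_le.1 hh
  have hψnn : 0 ≤ ψ h := by
    rcases le_total 0 h with h0 | h0
    · have := hψmono ⟨le_refl 0, hδpos.le⟩ ⟨h0, habs.2⟩ h0
      rw [hψ0] at this; exact this
    · have := hψanti ⟨habs.1, h0⟩ ⟨neg_nonpos.2 hδpos.le, le_refl 0⟩ h0
      rw [hψ0] at this; exact this
  have h5 : ψ h = (1+h)^q - (1 + q*h + B*h^2) := rfl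
  linarith [hψnn, h5.le, h5.ge]

set_option maxHeartbeats 1000000 in
lemma scalar_ineq {q κ : ℝ} (hq : 1 ≤ q) (hκ : 0 < κ) :
    ∃ C : ℝ, 0 < C ∧ ∀ t u : ℝ, 0 ≤ t → |u| ≤ t →
      1 + 2*q*u + (1-κ)*(q*t^2 + 2*q*(q-1)*u^2) ≤ (1+2*u+t^2)^q + C*t^(2*q) := by
  have hq0 : 0 < q := by linarith
  -- small-t regime
  obtain ⟨δ, hδpos, hδle, hsmall⟩ : ∃ δ : ℝ, 0 < δ ∧ δ ≤ 1/2 ∧ ∀ t u : ℝ, 0 ≤ t → t ≤ δ →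
      |u| ≤ t → 1 + 2*q*u + (1-κ)*(q*t^2 + 2*q*(q-1)*u^2) ≤ (1+2*u+t^2)^q := by
    by_cases hcase : q*(q-1)/2 ≤ κ*q/8
    · -- Bernoulli case
      refine ⟨1/2, by norm_num, le_refl _, ?_⟩
      intro t u ht htδ hu
      have hu1 := abs_le.1 hu
      have hu2 : u^2 ≤ t^2 := by nlinarith [hu1.1, hu1.2]
      have hd : q - 1 ≤ κ/4 := by
        have := hcase
        nlinarith
      have hm1 : (-1:ℝ) ≤ 2*u + t^2 := by nlinarith
      have hbern := one_add_mul_self_le_rpow_one_add hm1 hq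
      have hbase : (1:ℝ) + (2*u + t^2) = 1 + 2*u + t^2 := by ring
      rw [hbase] at hbern
      -- need : 1+2qu+(1-κ)(qt²+2q(q-1)u²) ≤ 1+q(2u+t²)
      have key : (1-κ)*(q*t^2 + 2*q*(q-1)*u^2) ≤ q*t^2 := by
        rcases le_total (1-κ) 0 with hk | hk
        · have h1 : 0 ≤ q*t^2 + 2*q*(q-1)*u^2 := by
            nlinarith [mul_nonneg (mul_nonneg hq0.le (by linarith : (0:ℝ) ≤ q-1)) (sq_nonneg u),
              mul_nonneg hq0.le (sq_nonneg t)]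
          nlinarith
        · nlinarith [mul_le_mul_of_nonneg_left hu2
              (by nlinarith : (0:ℝ) ≤ 2*q*(q-1)), mul_nonneg hq0.le (sq_nonneg u),
            mul_nonneg (mul_nonneg hq0.le (by linarith : (0:ℝ) ≤ q-1)) (sq_nonneg u)]
      linarith
    · -- Taylor case
      push_neg at hcase
      have hq1 : 1 < q := by nlinarith
      have hε : 0 < κ*q/8 := by positivity
      obtain ⟨δ₀, hδ₀pos, hδ₀le, htay⟩ := taylor2 hq1 hε
      refine ⟨min (δ₀/3) (κ/(4*(q-1))), lt_min (by linarith) (div_pos hκ (by linarith)), ?_, ?_⟩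
      · calc min (δ₀/3) (κ/(4*(q-1))) ≤ δ₀/3 := min_le_left _ _
          _ ≤ 1/2 := by linarith
      · intro t u ht htδ hu
        have htδ1 : t ≤ δ₀/3 := le_trans htδ (min_le_left _ _)
        have htδ2 : t ≤ κ/(4*(q-1)) := le_trans htδ (min_le_right _ _)
        have ht1 : t ≤ 1 := by linarith
        have hu1 := abs_le.1 hu
        have hu2 : u^2 ≤ t^2 := by nlinarith [hu1.1, hu1.2]
        have habs : |2*u + t^2| ≤ δ₀ := by
          rw [abs_le]
          constructor <;> nlinarith [hu1.1, hu1.2]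
        have hT := htay (2*u + t^2) habs
        have hbase : (1:ℝ) + (2*u + t^2) = 1 + 2*u + t^2 := by ring
        rw [hbase] at hT
        have hcube : t*t^2 ≤ (κ/(4*(q-1)))*t^2 :=
          mul_le_mul_of_nonneg_right htδ2 (sq_nonneg t)
        obtain ⟨B, hBdef⟩ : ∃ B : ℝ, B = q*(q-1)/2 - κ*q/8 := ⟨_, rfl⟩
        rw [← hBdef] at hT
        have hB : 0 ≤ B := by rw [hBdef]; linarith
        have e1 : -(t*t^2) ≤ u*t^2 := by
          have := mul_le_mul_of_nonneg_right hu1.1 (sq_nonneg t)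
          linarith
        have e2 := mul_le_mul_of_nonneg_left e1 hB
        have e3 : 0 ≤ B * (t^2)^2 := mul_nonneg hB (sq_nonneg _)
        have s1 : 4*B*u^2 - 4*B*(t*t^2) ≤ B*(2*u+t^2)^2 := by nlinarith [e2, e3]
        have s2 : 4*B*u^2 = 2*q*(q-1)*u^2 - (κ*q/2)*u^2 := by rw [hBdef]; ring
        have s3 : (κ*q/2)*u^2 ≤ (κ*q/2)*t^2 :=
          mul_le_mul_of_nonneg_left hu2 (by positivity)
        have s4 : 4*B*(t*t^2) ≤ 2*q*(q-1)*(t*t^2) := by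
          apply mul_le_mul_of_nonneg_right _ (mul_nonneg ht (sq_nonneg t))
          rw [hBdef]; linarith
        have s5 : 2*q*(q-1)*(t*t^2) ≤ (κ*q/2)*t^2 := by
          have h5 := mul_le_mul_of_nonneg_left hcube
            (by nlinarith : (0:ℝ) ≤ 2*q*(q-1))
          have hne : (4:ℝ)*(q-1) ≠ 0 := ne_of_gt (by linarith)
          have h6 : 2*q*(q-1)*((κ/(4*(q-1)))*t^2) = (κ*q/2)*t^2 := by
            field_simp
            rw [div_eq_iff (sub_ne_zero.2 (ne_of_gt hq1))]
            ring
          linarith [h5, h6.le, h6.ge]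
        have s6 : 0 ≤ κ*(2*q*(q-1)*u^2) := by
          apply mul_nonneg hκ.le
          nlinarith [sq_nonneg u]
        nlinarith [hT, s1, s2, s3, s4, s5, s6]
  -- large-t regime : choose C
  set M : ℝ := 1 + 2*q + |1 - κ| * (q + 2*q*(q-1)) with hM
  have hMpos : 0 < M := by
    have : 0 ≤ |1-κ| := abs_nonneg _
    nlinarith [mul_nonneg this (by nlinarith : (0:ℝ) ≤ q + 2*q*(q-1))]
  have hδq : 0 < δ^(2*q) := rpow_pos_of_pos hδpos _
  refine ⟨M + M/δ^(2*q), by positivity, ?_⟩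
  intro t u ht hu
  have hu1 := abs_le.1 hu
  have hu2 : u^2 ≤ t^2 := by nlinarith [hu1.1, hu1.2]
  have hbase0 : (0:ℝ) ≤ 1 + 2*u + t^2 := by nlinarith [sq_nonneg (1-t)]
  have hrpow0 : (0:ℝ) ≤ (1+2*u+t^2)^q := rpow_nonneg hbase0 _
  have htq0 : (0:ℝ) ≤ t^(2*q) := rpow_nonneg ht _
  rcases le_total t δ with htδ | htδ
  · have := hsmall t u ht htδ hu
    nlinarith [mul_nonneg (by positivity : (0:ℝ) ≤ M + M/δ^(2*q)) htq0]
  · -- t ≥ δ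
    have hLHS : 1 + 2*q*u + (1-κ)*(q*t^2 + 2*q*(q-1)*u^2) ≤ 1 + 2*q*t + |1 - κ| * ((q + 2*q*(q-1))*t^2) := by
      have h1 : (1-κ)*(q*t^2 + 2*q*(q-1)*u^2) ≤ |1 - κ| * (q*t^2 + 2*q*(q-1)*u^2) := by
        apply mul_le_mul_of_nonneg_right (le_abs_self _)
        nlinarith [mul_nonneg hq0.le (sq_nonneg t),
          mul_nonneg (mul_nonneg hq0.le (by linarith : (0:ℝ) ≤ q-1)) (sq_nonneg u)]
      have h2 : q*t^2 + 2*q*(q-1)*u^2 ≤ (q + 2*q*(q-1))*t^2 := by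
        nlinarith [mul_le_mul_of_nonneg_left hu2 (by nlinarith : (0:ℝ) ≤ 2*q*(q-1))]
      have h3 := mul_le_mul_of_nonneg_left h2 (abs_nonneg (1 - κ))
      nlinarith [hu1.2]
    rcases le_total 1 t with ht1 | ht1
    · -- t ≥ 1 : M t² ≤ M t^{2q}
      have ht2 : t^(2:ℝ) ≤ t^(2*q) := by
        apply rpow_le_rpow_of_exponent_le ht1
        nlinarith
      have ht2' : t^(2:ℝ) = t^2 := by
        rw [show (2:ℝ) = ((2:ℕ):ℝ) by norm_num, rpow_natCast]
      rw [ht2'] at ht2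
      have hMt : 1 + 2*q*t + |1 - κ| * ((q + 2*q*(q-1))*t^2) ≤ M*t^2 := by
        have h1 : (1:ℝ) ≤ t^2 := by nlinarith
        have h2 : t ≤ t^2 := by nlinarith
        nlinarith [mul_nonneg (abs_nonneg (1 - κ)) (by nlinarith : (0:ℝ) ≤ q + 2*q*(q-1))]
      have := mul_le_mul_of_nonneg_left ht2 hMpos.le
      nlinarith [mul_nonneg (le_of_lt (div_pos hMpos hδq)) htq0]
    · -- δ ≤ t ≤ 1
      have hMb : 1 + 2*q*t + |1 - κ| * ((q + 2*q*(q-1))*t^2) ≤ M := by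
        have h2 : t^2 ≤ 1 := by nlinarith
        nlinarith [mul_nonneg (abs_nonneg (1 - κ)) (by nlinarith : (0:ℝ) ≤ q + 2*q*(q-1))]
      have hδt : δ^(2*q) ≤ t^(2*q) := rpow_le_rpow hδpos.le htδ (by nlinarith)
      have hM2 : M ≤ (M/δ^(2*q))*t^(2*q) := by
        rw [div_mul_eq_mul_div, le_div_iff₀ hδq]
        nlinarith
      nlinarith [mul_nonneg hMpos.le htq0]

theorem stmt0 (n : ℕ) (hn : 2 ≤ n) (p κ : ℝ) (hp : 2 ≤ p) (hpn : p < n) (hκ : 0 < κ) :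
    ∃ C > 0, ∀ x y : EuclideanSpace ℝ (Fin n),
      ‖x + y‖ ^ p ≥ ‖x‖ ^ p + p * ‖x‖ ^ (p - 2) * ⟪x, y⟫_ℝ
        + (1 - κ) * ((p / 2) * ‖x‖ ^ (p - 2) * ‖y‖ ^ (2 : ℕ)
          + (p * (p - 2) / 2) * ‖x‖ ^ (p - 4) * ⟪x, y⟫_ℝ ^ (2 : ℕ))
        - C * ‖y‖ ^ p := by
  have hq : (1:ℝ) ≤ p/2 := by linarith
  obtain ⟨C, hC, hS⟩ := scalar_ineq (κ := κ) hq hκ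
  have h2q : 2 * (p/2) = p := by ring
  refine ⟨C, hC, ?_⟩
  intro x y
  by_cases hx : x = 0
  · subst hx
    simp only [inner_zero_left, norm_zero, zero_add, mul_zero, ne_eq]
    rw [Real.zero_rpow (by positivity : p ≠ 0)]
    have hy : (0:ℝ) ≤ ‖y‖ ^ p := rpow_nonneg (norm_nonneg y) p
    rcases eq_or_lt_of_le hp with hp2 | hp2
    · -- p = 2
      rw [← hp2]
      norm_num [Real.rpow_zero]
      nlinarith [sq_nonneg ‖y‖, mul_nonneg hC.le (sq_nonneg ‖y‖)]
    · -- p > 2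
      rw [Real.zero_rpow (by linarith : p - 2 ≠ 0)]
      simp only [mul_zero, zero_mul, ne_eq]
      ring_nf
      nlinarith [mul_nonneg hC.le hy]
  · have ha : 0 < ‖x‖ := norm_pos_iff.2 hx
    set a := ‖x‖ with hadef
    set b := ‖y‖ with hbdef
    set s := ⟪x, y⟫_ℝ with hsdef
    set t := b / a with htdef
    set u := s / a^2 with hudef
    have ht : 0 ≤ t := div_nonneg (norm_nonneg y) ha.le
    have hu : |u| ≤ t := by
      rw [hudef, htdef, abs_div, abs_of_pos (by positivity : (0:ℝ) < a^2)]
      rw [div_le_div_iff₀ (by positivity) ha]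
      calc |s| * a ≤ (a * b) * a := by
            apply mul_le_mul_of_nonneg_right _ ha.le
            exact abs_real_inner_le_norm x y
        _ = b * a^2 := by ring
    have hb : b = a * t := by rw [htdef]; field_simp
    have hs : s = a^2 * u := by rw [hudef]; field_simp
    have hap : (0:ℝ) < a ^ p := rpow_pos_of_pos ha _
    -- identities
    have hsq : ∀ z : ℝ, 0 ≤ z → ∀ r : ℝ, (z^(2:ℕ))^(r/2) = z^r := by
      intro z hz r
      rw [← rpow_natCast z 2, ← rpow_mul hz]
      congr 1
      push_cast
      ring
    have hbase0 : (0:ℝ) ≤ 1 + 2*u + t^2 := by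
      have h1 := (abs_le.1 hu).1
      nlinarith [sq_nonneg (1-t)]
    have E1 : ‖x + y‖ ^ p = a^p * (1 + 2*u + t^2)^(p/2) := by
      have hn2 : ‖x + y‖^(2:ℕ) = a^(2:ℕ) * (1 + 2*u + t^2) := by
        rw [norm_add_sq_real, ← hadef, ← hbdef, ← hsdef, hb, hs]; ring
      calc ‖x + y‖ ^ p = (‖x + y‖^(2:ℕ))^(p/2) := (hsq _ (norm_nonneg _) p).symm
        _ = (a^(2:ℕ))^(p/2) * (1 + 2*u + t^2)^(p/2) := by
            rw [hn2, Real.mul_rpow (by positivity) hbase0]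
        _ = a^p * (1 + 2*u + t^2)^(p/2) := by rw [hsq a ha.le p]
    have haa : ∀ r c : ℝ, a^r * a^c = a^(r+c) := fun r c => (rpow_add ha r c).symm
    have E2 : a^(p-2) * s = a^p * u := by
      rw [hs, show a^(2:ℕ) = a^(2:ℝ) by rw [rpow_two]]
      calc a^(p-2) * (a^(2:ℝ) * u) = (a^(p-2) * a^(2:ℝ)) * u := by ring
        _ = a^p * u := by rw [haa]; norm_num
    have E3 : a^(p-2) * b^(2:ℕ) = a^p * t^2 := by
      rw [hb]
      rw [show (a*t)^(2:ℕ) = a^(2:ℝ) * t^2 by rw [rpow_two]; ring]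
      calc a^(p-2) * (a^(2:ℝ) * t^2) = (a^(p-2) * a^(2:ℝ)) * t^2 := by ring
        _ = a^p * t^2 := by rw [haa]; norm_num
    have E4 : a^(p-4) * s^(2:ℕ) = a^p * u^2 := by
      rw [hs]
      rw [show (a^2*u)^(2:ℕ) = a^(4:ℝ) * u^2 by
        rw [show (4:ℝ) = ((4:ℕ):ℝ) by norm_num, rpow_natCast]; ring]
      calc a^(p-4) * (a^(4:ℝ) * u^2) = (a^(p-4) * a^(4:ℝ)) * u^2 := by ring
        _ = a^p * u^2 := by rw [haa]; norm_num
    have E5 : b^p = a^p * t^p := by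
      rw [hb, Real.mul_rpow ha.le ht]
    have key := hS t u ht hu
    rw [h2q] at key
    have key2 : 1 + p*u + (1-κ)*((p/2)*t^2 + (p*(p-2)/2)*u^2) - C*t^p
        ≤ (1 + 2*u + t^2)^(p/2) := by nlinarith [key]
    have key3 := mul_le_mul_of_nonneg_left key2 hap.le
    rw [E1]
    have expand : a ^ p + p * a ^ (p - 2) * s
        + (1 - κ) * ((p / 2) * a ^ (p - 2) * b ^ (2 : ℕ)
          + (p * (p - 2) / 2) * a ^ (p - 4) * s ^ (2 : ℕ))
        - C * b ^ p
        = a^p * (1 + p*u + (1-κ)*((p/2)*t^2 + (p*(p-2)/2)*u^2) - C*t^p) := by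
      linear_combination p * E2 + ((1-κ)*(p/2)) * E3 + ((1-κ)*(p*(p-2)/2)) * E4 - C * E5
    rw [ge_iff_le, expand]
    exact key3
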